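/- Let q be a prime power and σ : x ↦ x^{q^s} an automorphism of F_{q^m} with gcd(s,m)=1. Let f(x) = Σ_{i=0}^{k} a_i x^{σ^i} be a σ-linearized polynomial over F_{q^m} with a_k ≠ 0 and dim_{F_q} ker(f) = k (a σ-linearized polynomial with maximum kernel). Then the σ-linearized polynomial g(x) = Σ_{i=0}^{k} (a_{k−i} x)^{σ^i} = Σ_{i=0}^{k} a_{k−i}^{σ^i} x^{σ^i} also satisfies dim_{F_q} ker(g) = k. -/

import Mathlib

/-- `F_q`-dimension of the kernel (set of roots in `K`) of a map `f : K → K`. -/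
noncomputable def kdim (Fq : Type) [Field Fq] {K : Type} [Field K] [Algebra Fq K]
    (f : K → K) : ℕ :=
  Module.finrank Fq ↥(Submodule.span Fq {x : K | f x = 0})

/-- if `f(x) = Σ_{i=0}^{k} a_i x^{σ^i}` with `a_k ≠ 0` has maximum kernel
(`dim ker f = k`), then `g(x) = Σ_{i=0}^{k} (a_{k−i} x)^{σ^i}` also has `dim ker g = k`.
Here `σ : x ↦ x^{q^s}` with `gcd(s,m)=1`. -/
theorem stmt_2 (q s m k : ℕ) (Fq K : Type) [Field Fq] [Fintype Fq] [Field K] [Fintype K]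
    [Algebra Fq K] (hcard : Fintype.card Fq = q) (hfin : Module.finrank Fq K = m)
    (hs : Nat.gcd s m = 1)
    (a : Fin (k + 1) → K) (hak : a (Fin.last k) ≠ 0)
    (hker : kdim Fq (fun x : K => ∑ i : Fin (k + 1), a i * x ^ ((q ^ s) ^ (i : ℕ))) = k) :
    kdim Fq (fun x : K => ∑ i : Fin (k + 1), (a i.rev * x) ^ ((q ^ s) ^ (i : ℕ))) = k := by
  classical
  -- characteristic setup
  set p := ringChar Fq with hpdef
  haveI hcp : CharP Fq p := ringChar.charP Fq
  obtain ⟨t, hpprime, hqt⟩ := FiniteField.card Fq p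
  rw [hcard] at hqt
  haveI : Fact p.Prime := ⟨hpprime⟩
  haveI : CharP K p := charP_of_injective_algebraMap (algebraMap Fq K).injective p
  haveI : FiniteDimensional Fq K := inferInstance
  have hm : 0 < m := hfin ▸ Module.finrank_pos
  obtain ⟨m', rfl⟩ : ∃ m', m = m' + 1 := ⟨m - 1, by omega⟩
  have hq0 : 0 < q := hcard ▸ Fintype.card_pos
  -- the `q^u`-power ring homomorphisms
  let φ : ℕ → K →+* K := fun u => iterateFrobenius K p (t * u)
  have hφ : ∀ (u : ℕ) (z : K), φ u z = z ^ q ^ u := by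
    intro u z
    show z ^ p ^ (t * u) = z ^ q ^ u
    rw [hqt, ← pow_mul]
  -- scalars are fixed
  have hcfix : ∀ (c : Fq) (u : ℕ), (algebraMap Fq K c) ^ q ^ u = algebraMap Fq K c := by
    intro c u
    rw [← map_pow]
    congr 1
    rw [← hcard]
    exact FiniteField.pow_card_pow u c
  -- q^(m * u) power is the identity
  have hK : Fintype.card K = q ^ (m' + 1) := by
    rw [Module.card_eq_pow_finrank (K := Fq) (V := K), hcard, hfin]
  have hid : ∀ (u : ℕ) (z : K), z ^ q ^ ((m' + 1) * u) = z := by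
    intro u z
    rw [show q ^ ((m' + 1) * u) = (q ^ (m' + 1)) ^ u from pow_mul q _ u, ← hK]
    exact FiniteField.pow_card_pow u z
  -- trace invariance under q-power Frobenius
  have hbij : Function.Bijective (φ 1) := Finite.injective_iff_bijective.mp (φ 1).injective
  let ψ : K →ₐ[Fq] K :=
    { toRingHom := (φ 1 : K →+* K),
      commutes' := fun c => by
        show φ 1 (algebraMap Fq K c) = algebraMap Fq K c
        rw [hφ]; exact hcfix c 1 }
  let e : K ≃ₐ[Fq] K := AlgEquiv.ofBijective ψ hbij
  have htr1 : ∀ z : K, Algebra.trace Fq K (z ^ q) = Algebra.trace Fq K z := by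
    intro z
    have h := Algebra.trace_eq_of_algEquiv e z
    have he : e z = z ^ q := by
      show φ 1 z = z ^ q
      rw [hφ, pow_one]
    rwa [he] at h
  have htr : ∀ (u : ℕ) (z : K), Algebra.trace Fq K (z ^ q ^ u) = Algebra.trace Fq K z := by
    intro u
    induction u with
    | zero => simp
    | succ u ih =>
      intro z
      rw [pow_succ, pow_mul, htr1, ih]
  -- the linear map F for f
  have hQ : ∀ (i : ℕ) (z : K), z ^ (q ^ s) ^ i = φ (s * i) z := by
    intro i z
    rw [hφ, pow_mul]
  let F : K →ₗ[Fq] K :=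
    { toFun := fun x => ∑ i : Fin (k + 1), a i * x ^ ((q ^ s) ^ (i : ℕ)),
      map_add' := by
        intro x y
        simp only [hQ, map_add, mul_add, Finset.sum_add_distrib]
      map_smul' := by
        intro c x
        simp only [Algebra.smul_def, RingHom.id_apply]
        rw [Finset.mul_sum]
        refine Finset.sum_congr rfl fun i _ => ?_
        simp only [hQ, map_mul]
        rw [show φ (s * (i : ℕ)) (algebraMap Fq K c) = algebraMap Fq K c from by
          rw [hφ]; exact hcfix c _]
        ring }
  -- the "pre-adjoint" map h
  let hmap : K → K := fun x => ∑ j : Fin (k + 1), (a j * x) ^ q ^ (s * (m' * (j : ℕ)))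
  -- adjoint identity
  have hadj : ∀ x y : K,
      Algebra.trace Fq K (F y * x) = Algebra.trace Fq K (y * hmap x) := by
    intro x y
    show Algebra.trace Fq K ((∑ i : Fin (k + 1), a i * y ^ ((q ^ s) ^ (i : ℕ))) * x) = _
    rw [Finset.sum_mul, map_sum, Finset.mul_sum, map_sum]
    refine Finset.sum_congr rfl fun j _ => ?_
    rw [← htr (s * (m' * (j : ℕ))) (a j * y ^ ((q ^ s) ^ (j : ℕ)) * x)]
    congr 1
    rw [mul_pow, mul_pow]
    have hy : (y ^ (q ^ s) ^ (j : ℕ)) ^ q ^ (s * (m' * (j : ℕ))) = y := by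
      rw [← pow_mul, show (q ^ s) ^ (j : ℕ) = q ^ (s * (j : ℕ)) from (pow_mul q s j).symm,
        ← pow_add, show s * (j : ℕ) + s * (m' * (j : ℕ)) = (m' + 1) * (s * (j : ℕ)) from by ring]
      exact hid _ y
    rw [hy, mul_pow]
    ring
  -- g equals a Frobenius power of hmap
  have hgh : ∀ x : K,
      (∑ i : Fin (k + 1), (a i.rev * x) ^ ((q ^ s) ^ (i : ℕ))) = (hmap x) ^ q ^ (s * k) := by
    intro x
    rw [show (hmap x) ^ q ^ (s * k) = φ (s * k) (hmap x) from (hφ _ _).symm]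
    show _ = φ (s * k) (∑ j : Fin (k + 1), (a j * x) ^ q ^ (s * (m' * (j : ℕ))))
    rw [map_sum]
    refine Fintype.sum_bijective Fin.rev Fin.rev_bijective _ _ fun i => ?_
    have hle : (i : ℕ) ≤ k := Fin.is_le i
    have hik : ((Fin.rev i : Fin (k + 1)) : ℕ) = k - (i : ℕ) := by
      rw [Fin.val_rev]; omega
    rw [hik, hφ]
    obtain ⟨j, hj⟩ : ∃ j, k = (i : ℕ) + j := ⟨k - (i : ℕ), by omega⟩
    rw [show k - (i : ℕ) = j from by omega]
    have hsk : s * ((i : ℕ) + j) = s * k := by rw [← hj]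
    have hexp : s * (i : ℕ) + (m' + 1) * (s * j) = s * (m' * j) + s * k := by
      rw [← hsk]; ring
    calc (a i.rev * x) ^ (q ^ s) ^ ((i : ℕ))
        = (a i.rev * x) ^ q ^ (s * (i : ℕ)) := by
          rw [show (q ^ s) ^ ((i : ℕ)) = q ^ (s * (i : ℕ)) from (pow_mul q s _).symm]
      _ = ((a i.rev * x) ^ q ^ (s * (i : ℕ))) ^ q ^ ((m' + 1) * (s * j)) :=
          (hid _ _).symm
      _ = (a i.rev * x) ^ q ^ (s * (i : ℕ) + (m' + 1) * (s * j)) := by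
          rw [← pow_mul, ← pow_add]
      _ = (a i.rev * x) ^ q ^ (s * (m' * j) + s * k) := by rw [hexp]
      _ = ((a i.rev * x) ^ q ^ (s * (m' * j))) ^ q ^ (s * k) := by
          rw [pow_add, pow_mul]
  -- trace form setup
  let B := Algebra.traceForm Fq K
  haveI : Algebra.IsAlgebraic Fq K := Algebra.IsAlgebraic.of_finite Fq K
  have hB : B.Nondegenerate := traceForm_nondegenerate Fq K
  have hBrefl : B.IsRefl := (Algebra.traceForm_isSymm Fq (S := K)).isRefl
    -- the zero set of g is the orthogonal complement of range F
  have hgz : ∀ x : K, ((∑ i : Fin (k + 1), (a i.rev * x) ^ ((q ^ s) ^ (i : ℕ))) = 0)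
      ↔ hmap x = 0 := by
    intro x
    rw [hgh]
    exact pow_eq_zero_iff (by positivity)
  have hset : {x : K | (∑ i : Fin (k + 1), (a i.rev * x) ^ ((q ^ s) ^ (i : ℕ))) = 0}
      = (B.orthogonal (LinearMap.range F) : Set K) := by
    ext x
    simp only [Set.mem_setOf_eq, SetLike.mem_coe, LinearMap.BilinForm.mem_orthogonal_iff]
    rw [hgz]
    constructor
    · rintro hx y ⟨z, rfl⟩
      show B (F z) x = 0
      rw [Algebra.traceForm_apply, hadj, hx, mul_zero, map_zero]
    · intro hx
      refine hB.1 _ fun z => ?_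
      have h1 : B (F z) x = 0 := hx (F z) ⟨z, rfl⟩
      rw [Algebra.traceForm_apply] at h1 ⊢
      rw [mul_comm, ← hadj]
      exact h1
  -- kernel of F has dimension k
  have hkerF : Module.finrank Fq (LinearMap.ker F) = k := by
    have hs1 : {x : K | (∑ i : Fin (k + 1), a i * x ^ ((q ^ s) ^ (i : ℕ))) = 0}
        = (LinearMap.ker F : Set K) := rfl
    rw [kdim, hs1, Submodule.span_eq] at hker
    exact hker
  -- finish by dimension count
  have hrank := LinearMap.finrank_range_add_finrank_ker F
  rw [hfin, hkerF] at hrank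
  have horth := LinearMap.BilinForm.finrank_orthogonal hB (LinearMap.range F)
  rw [hfin] at horth
  rw [kdim, hset, Submodule.span_eq, horth]
  omega
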